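/- (Jacobian determinant identity for three estimating equations.) Define g₁(x,y,z) = (1−z)x + z(1−y), g₂(x,y,z) = (1−z)x(1−x) + z·y(1−y), and g₃(x,y,z) = (1−z)x(1−x)² + z·y²(1−y) on ℝ³. Then for all real x, y, z, the determinant of the 3×3 Jacobian matrix of (g₁, g₂, g₃) with respect to (x, y, z), evaluated at (x,y,z), equals −(1−z)·z·(1−x−y)⁴. -/

import Mathlib

/-- The population moment map `g₁(x,y,z) = (1−z)x + z(1−y)` of the noisy
network model (`x` = Type I error rate, `y` = Type II error rate, `z` = edge density). -/
noncomputable def g₁ (x y z : ℝ) : ℝ := (1 - z) * x + z * (1 - y)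

/-- The population moment map `g₂(x,y,z) = (1−z)x(1−x) + zy(1−y)`. -/
noncomputable def g₂ (x y z : ℝ) : ℝ := (1 - z) * x * (1 - x) + z * (y * (1 - y))

/-- The population moment map `g₃(x,y,z) = (1−z)x(1−x)² + zy²(1−y)`. -/
noncomputable def g₃ (x y z : ℝ) : ℝ := (1 - z) * x * (1 - x) ^ 2 + z * (y ^ 2 * (1 - y))


lemma d11 (x y z : ℝ) : deriv (fun x' => g₁ x' y z) x = 1 - z := by
  simp only [g₁]
  rw [deriv_fun_add (by fun_prop) (by fun_prop), deriv_const_mul _ (by fun_prop)]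
  simp

lemma d12 (x y z : ℝ) : deriv (fun y' => g₁ x y' z) y = -z := by
  simp only [g₁]
  rw [deriv_const_add]
  have : (fun y' : ℝ => z * (1 - y')) = fun y' => z - z * y' := by ext y'; ring
  rw [this, deriv_const_sub, deriv_const_mul _ (by fun_prop)]
  simp

lemma d13 (x y z : ℝ) : deriv (fun z' => g₁ x y z') z = -x + (1 - y) := by
  have : (fun z' : ℝ => g₁ x y z') = fun z' => x + z' * ((1-y) - x) := by
    ext z'; simp [g₁]; ring
  rw [this, deriv_const_add, deriv_mul_const (by fun_prop)]
  simp; ring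

lemma d21 (x y z : ℝ) : deriv (fun x' => g₂ x' y z) x = (1 - z) * (1 - 2*x) := by
  have : (fun x' : ℝ => g₂ x' y z) = fun x' => (1-z)*x' - (1-z)*x'^2 + z*(y*(1-y)) := by
    ext x'; simp [g₂]; ring
  rw [this, deriv_add_const, deriv_fun_sub (by fun_prop) (by fun_prop),
    deriv_const_mul _ (by fun_prop), deriv_const_mul _ (by fun_prop)]
  simp; ring

lemma d22 (x y z : ℝ) : deriv (fun y' => g₂ x y' z) y = z * (1 - 2*y) := by
  have : (fun y' : ℝ => g₂ x y' z) = fun y' => (1-z)*x*(1-x) + (z*y' - z*y'^2) := by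
    ext y'; simp [g₂]; ring
  rw [this, deriv_const_add, deriv_fun_sub (by fun_prop) (by fun_prop),
    deriv_const_mul _ (by fun_prop), deriv_const_mul _ (by fun_prop)]
  simp; ring

lemma d23 (x y z : ℝ) : deriv (fun z' => g₂ x y z') z = -(x*(1-x)) + y*(1-y) := by
  have : (fun z' : ℝ => g₂ x y z') = fun z' => x*(1-x) + z' * (y*(1-y) - x*(1-x)) := by
    ext z'; simp [g₂]; ring
  rw [this, deriv_const_add, deriv_mul_const (by fun_prop)]
  simp; ring

lemma d31 (x y z : ℝ) : deriv (fun x' => g₃ x' y z) x = (1-z)*((1-x)^2 + x*(2*(1-x))*(-1)) := by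
  have : (fun x' : ℝ => g₃ x' y z) = fun x' => (1-z)*(x' - 2*x'^2 + x'^3) + z*(y^2*(1-y)) := by
    ext x'; simp [g₃]; ring
  rw [this, deriv_add_const, deriv_const_mul _ (by fun_prop)]
  have h : deriv (fun x' : ℝ => x' - 2*x'^2 + x'^3) x = 1 - 4*x + 3*x^2 := by
    rw [deriv_fun_add (by fun_prop) (by fun_prop), deriv_fun_sub (by fun_prop) (by fun_prop),
      deriv_const_mul _ (by fun_prop)]
    simp; ring
  rw [h]; ring

lemma d32 (x y z : ℝ) : deriv (fun y' => g₃ x y' z) y = z*(2*y - 3*y^2) := by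
  have : (fun y' : ℝ => g₃ x y' z) = fun y' => (1-z)*x*(1-x)^2 + z*(y'^2 - y'^3) := by
    ext y'; simp only [g₃]; ring
  rw [this, deriv_const_add, deriv_const_mul _ (by fun_prop),
    deriv_fun_sub (by fun_prop) (by fun_prop), deriv_pow_field, deriv_pow_field]
  ring

lemma d33 (x y z : ℝ) : deriv (fun z' => g₃ x y z') z = -(x*(1-x)^2) + y^2*(1-y) := by
  have : (fun z' : ℝ => g₃ x y z') = fun z' => x*(1-x)^2 + z' * (y^2*(1-y) - x*(1-x)^2) := by
    ext z'; simp [g₃]; ring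
  rw [this, deriv_const_add, deriv_mul_const (by fun_prop)]
  simp; ring

/-- Jacobian determinant identity for the three estimating equations: the determinant
of the Jacobian of `(g₁, g₂, g₃)` with respect to `(x, y, z)` equals
`−(1−z)z(1−x−y)⁴`. -/
theorem jacobian_det_three_equations (x y z : ℝ) :
    Matrix.det
      !![deriv (fun x' => g₁ x' y z) x, deriv (fun y' => g₁ x y' z) y, deriv (fun z' => g₁ x y z') z;
         deriv (fun x' => g₂ x' y z) x, deriv (fun y' => g₂ x y' z) y, deriv (fun z' => g₂ x y z') z;
         deriv (fun x' => g₃ x' y z) x, deriv (fun y' => g₃ x y' z) y, deriv (fun z' => g₃ x y z') z]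
      = -((1 - z) * z * (1 - x - y) ^ 4) := by
  rw [d11, d12, d13, d21, d22, d23, d31, d32, d33, Matrix.det_fin_three]
  simp [Matrix.cons_val_zero, Matrix.cons_val_one]
  ring
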